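/- Every n×n column-stochastic matrix A (entries nonnegative, each column summing to 1) can be written as A = ∑_{k=1}^{m} e_k F_k, where m ≤ n(n−1)+1, each e_k ≥ 0 with ∑_{k=1}^{m} e_k = 1, and each F_k is an n×n {0,1} matrix with exactly one 1 in every column. -/

import Mathlib

/-- If every column contains an entry equal to 1, the matrix is deterministic. -/
lemma det_case (n : ℕ) (A : Fin n → Fin n → ℝ)
    (hnn : ∀ i j, 0 ≤ A i j) (hcol : ∀ j, ∑ i, A i j = 1)
    (hdet : ∀ j, ∃ i, A i j = 1) :
    (∀ i j, A i j = 0 ∨ A i j = 1) ∧ (∀ j, ∃! i, A i j = 1) := by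
  have key : ∀ j i, i ≠ Classical.choose (hdet j) → A i j = 0 := by
    intro j i hi
    set i₀ := Classical.choose (hdet j)
    have h1 : A i₀ j = 1 := Classical.choose_spec (hdet j)
    have hsum := hcol j
    rw [← Finset.add_sum_erase _ _ (Finset.mem_univ i₀)] at hsum
    have hz : ∑ i ∈ Finset.univ.erase i₀, A i j = 0 := by linarith
    have := (Finset.sum_eq_zero_iff_of_nonneg (fun i _ => hnn i j)).mp hz
    exact this i (Finset.mem_erase.mpr ⟨hi, Finset.mem_univ i⟩)
  constructor
  · intro i j
    by_cases hi : i = Classical.choose (hdet j)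
    · right; rw [hi]; exact Classical.choose_spec (hdet j)
    · left; exact key j i hi
  · intro j
    refine ⟨Classical.choose (hdet j), Classical.choose_spec (hdet j), ?_⟩
    intro i hi
    by_contra h
    rw [key j i h] at hi
    norm_num at hi

lemma aux_decomp (n : ℕ) (hn : 0 < n) (t : ℕ) :
    ∀ A : Fin n → Fin n → ℝ,
    (∀ i j, 0 ≤ A i j) → (∀ j, ∑ i, A i j = 1) →
    (Finset.univ.filter (fun p : Fin n × Fin n => A p.1 p.2 ≠ 0)).card ≤ t + n →
    ∃ (m : ℕ) (e : Fin m → ℝ) (F : Fin m → Fin n → Fin n → ℝ),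
      m ≤ t + 1 ∧
      (∀ k, 0 ≤ e k) ∧ (∑ k, e k = 1) ∧
      (∀ k i j, F k i j = 0 ∨ F k i j = 1) ∧
      (∀ k j, ∃! i, F k i j = 1) ∧
      (∀ i j, A i j = ∑ k, e k * F k i j) := by
  induction t with
  | zero =>
    intro A hnn hcol hcard
    -- each column has a nonzero entry
    have hex : ∀ j : Fin n, ∃ i, A i j ≠ 0 := by
      intro j
      by_contra h
      push_neg at h
      have := hcol j
      simp [h] at this
    choose f hf using hex
    -- claim A is deterministic
    have hdet : ∀ j, ∃ i, A i j = 1 := by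
      set S := Finset.univ.filter (fun p : Fin n × Fin n => A p.1 p.2 ≠ 0) with hS
      have hinj : Function.Injective (fun j : Fin n => ((f j, j) : Fin n × Fin n)) := by
        intro a b hab
        simpa using congrArg Prod.snd hab
      have himg : Finset.univ.image (fun j : Fin n => ((f j, j) : Fin n × Fin n)) ⊆ S := by
        intro p hp
        simp only [Finset.mem_image, Finset.mem_univ, true_and] at hp
        obtain ⟨j, rfl⟩ := hp
        simp [hS, hf j]
      have hc : (Finset.univ.image (fun j : Fin n => ((f j, j) : Fin n × Fin n))).card = n := by
        rw [Finset.card_image_of_injective _ hinj, Finset.card_univ, Fintype.card_fin]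
      have heq : Finset.univ.image (fun j : Fin n => ((f j, j) : Fin n × Fin n)) = S := by
        apply Finset.eq_of_subset_of_card_le himg
        simp only [zero_add] at hcard
        omega
      -- so each column's only nonzero entry is f j
      have honly : ∀ j i, A i j ≠ 0 → i = f j := by
        intro j i hij
        have : (i, j) ∈ S := by simp [hS, hij]
        rw [← heq] at this
        simp only [Finset.mem_image, Finset.mem_univ, true_and] at this
        obtain ⟨j', hj'⟩ := this
        have h2 : j' = j := congrArg Prod.snd hj'
        have h1 : f j' = i := congrArg Prod.fst hj'
        rw [← h1, h2]
      intro j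
      refine ⟨f j, ?_⟩
      have := hcol j
      rw [Finset.sum_eq_single (f j)] at this
      · exact this
      · intro i _ hi
        by_contra h
        exact hi (honly j i h)
      · simp
    obtain ⟨h01, huniq⟩ := det_case n A hnn hcol hdet
    exact ⟨1, fun _ => 1, fun _ => A, le_refl 1, fun _ => zero_le_one, by simp,
      fun _ => h01, fun _ => huniq, fun i j => by simp⟩
  | succ t ih =>
    intro A hnn hcol hcard
    by_cases hdet : ∀ j, ∃ i, A i j = 1
    · obtain ⟨h01, huniq⟩ := det_case n A hnn hcol hdet
      exact ⟨1, fun _ => 1, fun _ => A, by omega, fun _ => zero_le_one, by simp,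
        fun _ => h01, fun _ => huniq, fun i j => by simp⟩
    push_neg at hdet
    obtain ⟨j₁, hj₁⟩ := hdet
    -- pick in each column the minimal positive entry
    have hex : ∀ j : Fin n, ∃ i, 0 < A i j ∧ ∀ i', 0 < A i' j → A i j ≤ A i' j := by
      intro j
      have hne : (Finset.univ.filter (fun i => 0 < A i j)).Nonempty := by
        have : ∃ i, A i j ≠ 0 := by
          by_contra h
          push_neg at h
          have := hcol j
          simp [h] at this
        obtain ⟨i, hi⟩ := this
        exact ⟨i, by simp [lt_of_le_of_ne (hnn i j) (Ne.symm hi)]⟩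
      obtain ⟨i, hi, hmin⟩ := Finset.exists_min_image _ (fun i => A i j) hne
      simp only [Finset.mem_filter, Finset.mem_univ, true_and] at hi
      exact ⟨i, hi, fun i' hi' => hmin i' (by simp [hi'])⟩
    choose f hfpos hfmin using hex
    obtain ⟨j₀, _, hj₀⟩ := Finset.exists_min_image Finset.univ (fun j => A (f j) j)
      ⟨⟨0, hn⟩, Finset.mem_univ _⟩
    set e := A (f j₀) j₀ with he
    have hepos : 0 < e := hfpos j₀
    have hele : ∀ j, e ≤ A (f j) j := fun j => hj₀ j (Finset.mem_univ j)
    have helt1 : e < 1 := by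
      have h1 : A (f j₁) j₁ ≤ 1 := by
        have := hcol j₁
        calc A (f j₁) j₁ ≤ ∑ i, A i j₁ :=
          Finset.single_le_sum (fun i _ => hnn i j₁) (Finset.mem_univ _)
        _ = 1 := this
      exact lt_of_le_of_lt (hele j₁) (lt_of_le_of_ne h1 (hj₁ (f j₁)))
    have h1e : (0:ℝ) < 1 - e := by linarith
    set F : Fin n → Fin n → ℝ := fun i j => if i = f j then 1 else 0 with hF
    set A' : Fin n → Fin n → ℝ := fun i j => (A i j - e * F i j) / (1 - e) with hA'
    have hFsum : ∀ j, ∑ i, F i j = 1 := by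
      intro j; simp [hF]
    have hnn' : ∀ i j, 0 ≤ A' i j := by
      intro i j
      apply div_nonneg _ (le_of_lt h1e)
      by_cases hij : i = f j
      · simp only [hF, hij, if_pos rfl, mul_one]
        have := hele j; linarith
      · simp [hF, hij, hnn i j]
    have hcol' : ∀ j, ∑ i, A' i j = 1 := by
      intro j
      simp only [hA']
      rw [← Finset.sum_div, Finset.sum_sub_distrib, ← Finset.mul_sum, hcol j, hFsum j]
      field_simp
    have hsupp : (Finset.univ.filter (fun p : Fin n × Fin n => A' p.1 p.2 ≠ 0)).card ≤ t + n := by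
      have hsub : (Finset.univ.filter (fun p : Fin n × Fin n => A' p.1 p.2 ≠ 0)) ⊂
          (Finset.univ.filter (fun p : Fin n × Fin n => A p.1 p.2 ≠ 0)) := by
        constructor
        · intro p hp
          simp only [Finset.mem_filter, Finset.mem_univ, true_and] at hp ⊢
          by_cases hij : p.1 = f p.2
          · rw [hij]; exact ne_of_gt (hfpos p.2)
          · intro h
            apply hp
            simp [hA', hF, hij, h]
        · intro hcon
          have hmem : ((f j₀, j₀) : Fin n × Fin n) ∈
              Finset.univ.filter (fun p : Fin n × Fin n => A p.1 p.2 ≠ 0) := by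
            simp [ne_of_gt (hfpos j₀)]
          have := hcon hmem
          simp only [Finset.mem_filter, Finset.mem_univ, true_and] at this
          apply this
          simp [hA', hF, ← he]
      have := Finset.card_lt_card hsub
      omega
    obtain ⟨m, e₂, F₂, hm, he₂nn, he₂sum, hF₂01, hF₂uniq, hA₂⟩ := ih A' hnn' hcol' hsupp
    refine ⟨m + 1, Fin.cases e (fun k => (1 - e) * e₂ k),
      Fin.cases F F₂, by omega, ?_, ?_, ?_, ?_, ?_⟩
    · intro k
      refine Fin.cases ?_ ?_ k
      · exact le_of_lt hepos
      · intro k'; exact mul_nonneg (le_of_lt h1e) (he₂nn k')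
    · rw [Fin.sum_univ_succ]
      simp only [Fin.cases_zero, Fin.cases_succ]
      rw [← Finset.mul_sum, he₂sum]
      ring
    · intro k i j
      refine Fin.cases ?_ ?_ k
      · simp only [Fin.cases_zero, hF]
        by_cases hij : i = f j <;> simp [hij]
      · intro k'; simpa using hF₂01 k' i j
    · intro k j
      refine Fin.cases ?_ ?_ k
      · refine ⟨f j, by simp [hF], ?_⟩
        intro i hi
        simp only [Fin.cases_zero, hF] at hi
        by_contra h
        rw [if_neg h] at hi
        norm_num at hi
      · intro k'; simpa using hF₂uniq k' j
    · intro i j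
      rw [Fin.sum_univ_succ]
      simp only [Fin.cases_zero, Fin.cases_succ]
      have : ∑ k, (1 - e) * e₂ k * F₂ k i j = (1 - e) * A' i j := by
        rw [hA₂ i j, Finset.mul_sum]
        apply Finset.sum_congr rfl
        intro k _; ring
      rw [this]
      simp only [hA']
      field_simp
      ring

/-- **Decomposition of column-stochastic matrices.**
Every `n × n` column-stochastic matrix `A` (nonnegative entries, each column summing to `1`)
can be written as `A = ∑_{k=1}^{m} e_k F_k` with `m ≤ n(n-1) + 1`, where the `e_k` are
nonnegative and sum to `1`, and each `F_k` is an `n × n` `{0,1}` matrix with exactly one `1`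
in every column. -/
theorem column_stochastic_decomposition
    (n : ℕ) (A : Fin n → Fin n → ℝ)
    (hnn : ∀ i j, 0 ≤ A i j) (hcol : ∀ j, ∑ i, A i j = 1) :
    ∃ (m : ℕ) (e : Fin m → ℝ) (F : Fin m → Fin n → Fin n → ℝ),
      m ≤ n * (n - 1) + 1 ∧
      (∀ k, 0 ≤ e k) ∧ (∑ k, e k = 1) ∧
      (∀ k i j, F k i j = 0 ∨ F k i j = 1) ∧
      (∀ k j, ∃! i, F k i j = 1) ∧
      (∀ i j, A i j = ∑ k, e k * F k i j) := by
  rcases Nat.eq_zero_or_pos n with hn | hn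
  · subst hn
    exact ⟨1, fun _ => 1, fun _ i => i.elim0, by norm_num, fun _ => zero_le_one, by simp,
      fun _ i => i.elim0, fun _ j => j.elim0, fun i => i.elim0⟩
  · have hcard : (Finset.univ.filter (fun p : Fin n × Fin n => A p.1 p.2 ≠ 0)).card
        ≤ n * (n - 1) + n := by
      have h1 : (Finset.univ.filter (fun p : Fin n × Fin n => A p.1 p.2 ≠ 0)).card
          ≤ (Finset.univ : Finset (Fin n × Fin n)).card := Finset.card_filter_le _ _
      simp only [Finset.card_univ, Fintype.card_prod, Fintype.card_fin] at h1
      have : n * (n - 1) + n = n * n := by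
        cases n with
        | zero => rfl
        | succ k => simp only [Nat.succ_sub_one]; ring
      omega
    obtain ⟨m, e, F, hm, h⟩ := aux_decomp n hn (n * (n - 1)) A hnn hcol hcard
    exact ⟨m, e, F, hm, h⟩
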